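/- Let X and Y be Banach spaces, Γ an arbitrary set, E an invariant sequence space over X, and E_λ a strongly invariant sequence space over Y for all λ ∈ Γ. If f : X → Y is compatible with E_λ for each λ ∈ Γ, then G(E, f, (E_λ)_{λ∈Γ}) is either empty or 𝔠-spaceable in E. -/

import Mathlib

/-- The zero-free version `x⁰` of a sequence: if `x` has infinitely many nonzero
coordinates, it enumerates them in increasing order of index; otherwise it is `0`. -/
noncomputable def zeroFree {X : Type*} [Zero X] (x : ℕ → X) : ℕ → X :=
  haveI := Classical.dec ({j | x j ≠ 0}.Infinite)
  if {j | x j ≠ 0}.Infinite then (fun k => x (Nat.nth (fun j => x j ≠ 0) k)) else 0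

/-- An invariant sequence space over a Banach space `X`: an infinite-dimensional Banach
space of `X`-valued sequences satisfying (b1) and (b2) of Definition 2.1 of [BDFP]. -/
structure InvSeqSpace (𝕂 : Type*) [RCLike 𝕂] (X : Type*)
    [NormedAddCommGroup X] [NormedSpace 𝕂 X] where
  carrier : Submodule 𝕂 (ℕ → X)
  nrm : (ℕ → X) → ℝ
  K : ℝ
  infinite_dim : ¬ Module.Finite 𝕂 carrier
  nrm_nonneg : ∀ x ∈ carrier, 0 ≤ nrm x
  nrm_eq_zero_iff : ∀ x ∈ carrier, (nrm x = 0 ↔ x = 0)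
  nrm_add_le : ∀ x ∈ carrier, ∀ y ∈ carrier, nrm (x + y) ≤ nrm x + nrm y
  nrm_smul : ∀ (a : 𝕂), ∀ x ∈ carrier, nrm (a • x) = ‖a‖ * nrm x
  complete : ∀ u : ℕ → (ℕ → X), (∀ n, u n ∈ carrier) →
    (∀ ε : ℝ, 0 < ε → ∃ N, ∀ m ≥ N, ∀ n ≥ N, nrm (u m - u n) < ε) →
    ∃ v ∈ carrier, ∀ ε : ℝ, 0 < ε → ∃ N, ∀ n ≥ N, nrm (u n - v) < ε
  zeroFree_mem_iff : ∀ x : ℕ → X, zeroFree x ≠ 0 → (x ∈ carrier ↔ zeroFree x ∈ carrier)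
  nrm_le_K_mul : ∀ x : ℕ → X, zeroFree x ≠ 0 → x ∈ carrier → nrm x ≤ K * nrm (zeroFree x)
  coord_le_nrm : ∀ x ∈ carrier, ∀ j, ‖x j‖ ≤ nrm x

/-- A strongly invariant sequence space: an invariant sequence space containing `c₀₀(X)`
and such that a sequence belongs to it iff all its subsequences do. -/
structure StrongInvSeqSpace (𝕂 : Type*) [RCLike 𝕂] (X : Type*)
    [NormedAddCommGroup X] [NormedSpace 𝕂 X] extends InvSeqSpace 𝕂 X where
  c00_subset : ∀ x : ℕ → X, (∃ N, ∀ j, N ≤ j → x j = 0) → x ∈ carrier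
  mem_iff_subseq : ∀ x : ℕ → X,
    x ∈ carrier ↔ ∀ g : ℕ → ℕ, StrictMono g → (fun k => x (g k)) ∈ carrier

/-- `f` is compatible with a sequence space `E` (Definition 2.3 of [NP]). -/
def Compatible (𝕂 : Type*) [RCLike 𝕂] {X Y : Type*}
    [NormedAddCommGroup X] [NormedSpace 𝕂 X] [NormedAddCommGroup Y] [NormedSpace 𝕂 Y]
    (f : X → Y) (E : Set (ℕ → Y)) : Prop :=
  f 0 = 0 ∧ ∀ (x : ℕ → X) (a : 𝕂), a ≠ 0 →
    (fun j => f (x j)) ∉ E → (fun j => f (a • x j)) ∉ E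

/-- The set `G(E, f, (E_λ)_{λ∈Γ})`. -/
def Gset {𝕂 : Type*} [RCLike 𝕂] {X Y Γ : Type*}
    [NormedAddCommGroup X] [NormedSpace 𝕂 X] [NormedAddCommGroup Y] [NormedSpace 𝕂 Y]
    (E : InvSeqSpace 𝕂 X) (f : X → Y) (F : Γ → StrongInvSeqSpace 𝕂 Y) : Set (ℕ → X) :=
  {x | x ∈ E.carrier ∧ (fun j => f (x j)) ∉ ⋃ lam, ((F lam).carrier : Set (ℕ → Y))}

/-- `W` is closed in the sequence space `E` (w.r.t. the metric induced by `E.nrm`). -/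
def ClosedIn {𝕂 : Type*} [RCLike 𝕂] {X : Type*}
    [NormedAddCommGroup X] [NormedSpace 𝕂 X]
    (E : InvSeqSpace 𝕂 X) (W : Set (ℕ → X)) : Prop :=
  ∀ x ∈ E.carrier, (∀ ε : ℝ, 0 < ε → ∃ y ∈ W, E.nrm (x - y) < ε) → x ∈ W

/-! ### Auxiliary lemmas about `Nat.nth` and `zeroFree` -/

section Nth

lemma nth_eq_of_range {p : ℕ → Prop} {f : ℕ → ℕ} (hf : StrictMono f)
    (hr : Set.range f = setOf p) : Nat.nth p = f := by
  have hinf : (setOf p).Infinite := by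
    rw [← hr]; exact Set.infinite_range_of_injective hf.injective
  exact ((Nat.nth_strictMono hinf).range_inj hf).mp
    (by rw [Nat.range_nth_of_infinite hinf, hr]; rfl)

lemma pair_strictMono (i : ℕ) : StrictMono (Nat.pair i) :=
  strictMono_nat_of_lt_succ fun n => Nat.pair_lt_pair_right i (Nat.lt_succ_self n)

end Nth

section ZeroFree

variable {X : Type*} [Zero X] {x : ℕ → X}

lemma zeroFree_of_infinite (hx : {j | x j ≠ 0}.Infinite) :
    zeroFree x = fun k => x (Nat.nth (fun j => x j ≠ 0) k) := by
  simp only [zeroFree, hx, if_pos]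

lemma zeroFree_of_finite (hx : ¬ {j | x j ≠ 0}.Infinite) : zeroFree x = 0 := by
  simp only [zeroFree, hx, if_false]

lemma zeroFree_ne_zero_iff : zeroFree x ≠ 0 ↔ {j | x j ≠ 0}.Infinite := by
  constructor
  · intro h
    by_contra hfin
    exact h (zeroFree_of_finite hfin)
  · intro hx h
    have h0 : zeroFree x 0 = 0 := by rw [h]; rfl
    rw [zeroFree_of_infinite hx] at h0
    exact Nat.nth_mem_of_infinite (p := fun j => x j ≠ 0) hx 0 h0

lemma zeroFree_apply (hx : {j | x j ≠ 0}.Infinite) (k : ℕ) :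
    zeroFree x k = x (Nat.nth (fun j => x j ≠ 0) k) := by
  rw [zeroFree_of_infinite hx]

/-- The zero-free version of `g ∘ x` equals that of `g ∘ zeroFree x`. -/
lemma zeroFree_comp {Y : Type*} [Zero Y] (g : X → Y) (hg : g 0 = 0)
    (hx : {j | x j ≠ 0}.Infinite) :
    zeroFree (fun j => g (x j)) = zeroFree (fun k => g (zeroFree x k)) := by
  set p : ℕ → Prop := fun j => x j ≠ 0 with hp
  have hxp : {j | x j ≠ 0} = setOf p := rfl
  rw [hxp] at hx
  set ν : ℕ → ℕ := Nat.nth p with hν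
  have hνmono : StrictMono ν := Nat.nth_strictMono hx
  have hz : ∀ k, zeroFree x k = x (ν k) := fun k => zeroFree_apply hx k
  set q : ℕ → Prop := fun k => g (zeroFree x k) ≠ 0 with hq
  set r : ℕ → Prop := fun j => g (x j) ≠ 0 with hr
  have hkey : setOf r = ν '' setOf q := by
    ext j
    constructor
    · intro hj
      have hxj : x j ≠ 0 := fun h0 => hj (by simp [hr, h0, hg])
      have : j ∈ Set.range ν := by
        rw [hν, Nat.range_nth_of_infinite hx]; exact hxj
      obtain ⟨k, rfl⟩ := this
      exact ⟨k, show g (zeroFree x k) ≠ 0 by rw [hz k]; exact hj, rfl⟩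
    · rintro ⟨k, hk, rfl⟩
      show g (x (ν k)) ≠ 0
      rw [← hz k]; exact hk
  by_cases hQ : (setOf q).Infinite
  · have hR : (setOf r).Infinite := by
      rw [hkey]; exact hQ.image (hνmono.injective.injOn)
    have hcomp : Nat.nth r = fun k => ν (Nat.nth q k) := by
      apply nth_eq_of_range (hνmono.comp (Nat.nth_strictMono hQ))
      rw [Set.range_comp, Nat.range_nth_of_infinite hQ, hkey]
      rfl
    funext k
    rw [zeroFree_apply (x := fun j => g (x j)) hR,
      zeroFree_apply (x := fun k => g (zeroFree x k)) hQ]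
    show g (x (Nat.nth r k)) = g (zeroFree x (Nat.nth q k))
    rw [hcomp, hz]
  · have hR : ¬ (setOf r).Infinite := by
      rw [hkey]
      intro h
      exact hQ ((Set.infinite_image_iff hνmono.injective.injOn).mp h)
    rw [zeroFree_of_finite (x := fun j => g (x j)) hR,
      zeroFree_of_finite (x := fun k => g (zeroFree x k)) hQ]

lemma eventually_zero_of_finite (h : ¬ {j | x j ≠ 0}.Infinite) :
    ∃ N, ∀ j, N ≤ j → x j = 0 := by
  rw [Set.not_infinite] at h
  obtain ⟨N, hN⟩ := h.bddAbove
  refine ⟨N + 1, fun j hj => ?_⟩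
  by_contra hxj
  exact absurd (hN hxj) (by omega)

end ZeroFree

section Vandermonde

lemma vandermonde_trick {𝕂 : Type*} [Field 𝕂] {M : ℕ} (t : Fin M → 𝕂)
    (ht : Function.Injective t) (a : Fin M → 𝕂)
    (h : ∀ i : ℕ, ∑ m, a m * t m ^ i = 0) : a = 0 := by
  have hd : (Matrix.vandermonde t).det ≠ 0 := by
    rw [Matrix.det_vandermonde_ne_zero_iff]; exact ht
  have hd' : ((Matrix.vandermonde t).transpose).det ≠ 0 := by rwa [Matrix.det_transpose]
  apply Matrix.eq_zero_of_mulVec_eq_zero hd'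
  funext i
  have := h (i : ℕ)
  simpa [Matrix.mulVec, Matrix.vandermonde, Matrix.transpose_apply, dotProduct,
    mul_comm] using this

end Vandermonde

/-! ### Cardinality bound for closures of countable spans -/

section Card

open Cardinal Set

variable {𝕂 : Type*} [RCLike 𝕂] {V : Type*} [NormedAddCommGroup V] [NormedSpace 𝕂 V]

lemma rclike_embeds : ∃ e : 𝕂 → ℝ × ℝ, Function.Injective e := by
  refine ⟨fun a => (RCLike.re a, RCLike.im a), fun a b h => ?_⟩
  have h1 := congrArg Prod.fst h
  have h2 := congrArg Prod.snd h
  exact RCLike.ext h1 h2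

lemma mk_fun_fun_le : #(ℕ → ℕ → ℝ × ℝ) ≤ 𝔠 := by
  have h1 : #(ℝ × ℝ) = 𝔠 := by
    rw [Cardinal.mk_prod, Cardinal.mk_real]
    simp [Cardinal.lift_continuum, Cardinal.mul_eq_self aleph0_le_continuum]
  have h2 : #(ℕ → ℝ × ℝ) = 𝔠 := by
    rw [← Cardinal.power_def, h1, Cardinal.mk_nat, Cardinal.continuum_power_aleph0]
  rw [← Cardinal.power_def, h2, Cardinal.mk_nat, Cardinal.continuum_power_aleph0]

/-- Rank bound for the closure of the span of a countable family. -/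
lemma rank_closure_span_le (g : ℕ → V) :
    Module.rank 𝕂 ↥((Submodule.span 𝕂 (Set.range g)).topologicalClosure) ≤ 𝔠 := by
  set S : Submodule 𝕂 V := Submodule.span 𝕂 (Set.range g) with hS
  obtain ⟨e1, he1⟩ := rclike_embeds (𝕂 := 𝕂)
  have hsurj : Function.Surjective
      (fun l : ℕ →₀ 𝕂 => (⟨Finsupp.linearCombination 𝕂 g l, by
        rw [hS, ← Finsupp.range_linearCombination]
        exact LinearMap.mem_range_self _ l⟩ : ↥S)) := by
    rintro ⟨x, hx⟩
    rw [hS, ← Finsupp.range_linearCombination] at hx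
    obtain ⟨l, hl⟩ := hx
    exact ⟨l, Subtype.ext hl⟩
  have espan : ∃ e : ↥S → (ℕ → ℝ × ℝ), Function.Injective e := by
    refine ⟨fun s n => e1 (Function.surjInv hsurj s n), ?_⟩
    intro a b h
    apply Function.injective_surjInv hsurj
    ext n
    exact he1 (congrFun h n)
  obtain ⟨e2, he2⟩ := espan
  have hseq : ∀ x : ↥(S.topologicalClosure),
      ∃ u : ℕ → ↥S, Filter.Tendsto (fun n => ((u n : V))) Filter.atTop (nhds ↑x) := by
    rintro ⟨x, hx⟩
    have hx' : x ∈ closure (S : Set V) := by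
      have : x ∈ (S.topologicalClosure : Set V) := hx
      rwa [Submodule.topologicalClosure_coe] at this
    rw [mem_closure_iff_seq_limit] at hx'
    obtain ⟨u, hu, hlim⟩ := hx'
    exact ⟨fun n => ⟨u n, hu n⟩, hlim⟩
  have emb : ∃ e : ↥(S.topologicalClosure) → (ℕ → ℕ → ℝ × ℝ), Function.Injective e := by
    choose u hu using hseq
    refine ⟨fun x n => e2 (u x n), ?_⟩
    intro a b h
    have hueq : u a = u b := by
      funext n
      exact he2 (congrFun h n)
    have := hu a
    rw [hueq] at this
    exact Subtype.ext (tendsto_nhds_unique this (hu b))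
  obtain ⟨e3, he3⟩ := emb
  have hcard : #↥(S.topologicalClosure) ≤ 𝔠 := by
    have := Cardinal.lift_mk_le'.mpr ⟨⟨e3, he3⟩⟩
    rw [Cardinal.lift_uzero] at this
    calc #↥(S.topologicalClosure) ≤ Cardinal.lift.{_} #(ℕ → ℕ → ℝ × ℝ) := this
      _ ≤ Cardinal.lift.{_} 𝔠 := Cardinal.lift_le.mpr mk_fun_fun_le
      _ = 𝔠 := Cardinal.lift_continuum
  exact le_trans (rank_le_card _ _) hcard

end Card

/-! ### The Banach space structure on the carrier of an invariant sequence space -/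

namespace InvSeqSpace

variable {𝕂 : Type*} [RCLike 𝕂] {X : Type*} [NormedAddCommGroup X] [NormedSpace 𝕂 X]
  (E : InvSeqSpace 𝕂 X)

/-- Type synonym for the carrier, on which we install the `nrm`-topology. -/
def V : Type _ := ↥E.carrier

instance : AddCommGroup E.V := inferInstanceAs (AddCommGroup ↥E.carrier)
instance : Module 𝕂 E.V := inferInstanceAs (Module 𝕂 ↥E.carrier)

variable {E}

/-- The underlying sequence. -/
def V.seq (v : E.V) : ℕ → X := Subtype.val (v : ↥E.carrier)

lemma V.seq_mem (v : E.V) : v.seq ∈ E.carrier := (v : ↥E.carrier).2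

@[simp] lemma V.seq_add (v w : E.V) : (v + w).seq = v.seq + w.seq := rfl
@[simp] lemma V.seq_sub (v w : E.V) : (v - w).seq = v.seq - w.seq := rfl
@[simp] lemma V.seq_neg (v : E.V) : (-v).seq = -v.seq := rfl
@[simp] lemma V.seq_zero : (0 : E.V).seq = 0 := rfl
@[simp] lemma V.seq_smul (a : 𝕂) (v : E.V) : (a • v).seq = a • v.seq := rfl

lemma V.seq_injective : Function.Injective (V.seq : E.V → ℕ → X) :=
  fun _ _ h => Subtype.ext h

variable (E)

/-- Inclusion as a linear map. -/
def V.incl : E.V →ₗ[𝕂] (ℕ → X) where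
  toFun := V.seq
  map_add' := fun _ _ => rfl
  map_smul' := fun _ _ => rfl

@[simp] lemma V.incl_apply (v : E.V) : V.incl E v = v.seq := rfl

def V.mk (x : ℕ → X) (h : x ∈ E.carrier) : E.V := (⟨x, h⟩ : ↥E.carrier)

@[simp] lemma V.seq_mk (x : ℕ → X) (h : x ∈ E.carrier) : (V.mk E x h).seq = x := rfl

noncomputable instance : NormedAddCommGroup E.V :=
  AddGroupNorm.toNormedAddCommGroup
  { toFun := fun v => E.nrm v.seq
    map_zero' := by
      show E.nrm (0 : E.V).seq = 0
      rw [V.seq_zero]; exact (E.nrm_eq_zero_iff 0 (zero_mem _)).mpr rfl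
    add_le' := fun a b => by
      show E.nrm ((a + b).seq) ≤ E.nrm a.seq + E.nrm b.seq
      rw [V.seq_add]; exact E.nrm_add_le _ a.seq_mem _ b.seq_mem
    neg' := fun a => by
      have h := E.nrm_smul (-1 : 𝕂) a.seq a.seq_mem
      show E.nrm ((-a).seq) = E.nrm a.seq
      rw [V.seq_neg]
      simpa using h
    eq_zero_of_map_eq_zero' := fun a h =>
      V.seq_injective ((E.nrm_eq_zero_iff a.seq a.seq_mem).mp h) }

variable {E}

lemma V.norm_def (v : E.V) : ‖v‖ = E.nrm v.seq := rfl

lemma V.dist_def (v w : E.V) : dist v w = E.nrm (v.seq - w.seq) := by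
  rw [dist_eq_norm]
  rw [show ‖v - w‖ = E.nrm ((v - w).seq) from rfl, V.seq_sub]

noncomputable instance : NormedSpace 𝕂 E.V where
  norm_smul_le a v := by
    rw [V.norm_def, V.norm_def]
    rw [V.seq_smul, E.nrm_smul a v.seq v.seq_mem]

instance : CompleteSpace E.V := by
  apply Metric.complete_of_cauchySeq_tendsto
  intro u hu
  obtain ⟨v, hv, hconv⟩ := E.complete (fun n => (u n).seq) (fun n => (u n).seq_mem)
    (by
      intro ε hε
      obtain ⟨N, hN⟩ := Metric.cauchySeq_iff.mp hu ε hε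
      exact ⟨N, fun m hm n hn => by
        have := hN m hm n hn
        rwa [V.dist_def] at this⟩)
  refine ⟨V.mk E v hv, Metric.tendsto_atTop.mpr ?_⟩
  intro ε hε
  obtain ⟨N, hN⟩ := hconv ε hε
  exact ⟨N, fun n hn => by rw [V.dist_def, V.seq_mk]; exact hN n hn⟩

variable (E)

/-- The `j`-th coordinate map as a continuous linear map. -/
noncomputable def coordCLM (j : ℕ) : E.V →L[𝕂] X :=
  LinearMap.mkContinuous
    { toFun := fun v => v.seq j
      map_add' := fun a b => rfl
      map_smul' := fun a v => rfl }
    1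
    (fun v => by
      rw [one_mul, V.norm_def]
      exact E.coord_le_nrm v.seq v.seq_mem j)

lemma coordCLM_apply (j : ℕ) (v : E.V) : E.coordCLM j v = v.seq j := rfl

/-- Transfer of a closed submodule of `E.V` to the ambient sequence space. -/
lemma map_incl_spec (W : Submodule 𝕂 E.V) (hW : IsClosed (W : Set E.V)) :
    ((W.map (V.incl E) : Submodule 𝕂 (ℕ → X)) : Set (ℕ → X)) ⊆ E.carrier ∧
    ClosedIn E ((W.map (V.incl E)) : Set (ℕ → X)) ∧
    Module.rank 𝕂 ↥(W.map (V.incl E)) = Module.rank 𝕂 ↥W := by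
  refine ⟨?_, ?_, ?_⟩
  · rintro x ⟨v, hv, rfl⟩
    exact v.seq_mem
  · intro x hx happrox
    have : (V.mk E x hx) ∈ closure (W : Set E.V) := by
      rw [Metric.mem_closure_iff]
      intro ε hε
      obtain ⟨y, hy, hylt⟩ := happrox ε hε
      obtain ⟨w, hw, rfl⟩ := hy
      refine ⟨w, hw, ?_⟩
      rw [V.dist_def, V.seq_mk]
      exact hylt
    rw [hW.closure_eq] at this
    exact ⟨V.mk E x hx, this, rfl⟩
  · exact (Submodule.equivMapOfInjective (V.incl E) V.seq_injective W).symm.rank_eq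

/-- **Main construction**: from a vector `z ∈ E` with all coordinates nonzero, we produce a
closed `𝔠`-dimensional subspace all whose elements are "block-wise multiples" of `z`. -/
lemma main_construction (z : ℕ → X) (hzmem : z ∈ E.carrier) (hz : ∀ k, z k ≠ 0) :
    ∃ W : Submodule 𝕂 (ℕ → X),
      (W : Set (ℕ → X)) ⊆ E.carrier ∧ ClosedIn E (W : Set (ℕ → X)) ∧
      Module.rank 𝕂 ↥W = Cardinal.continuum ∧
      ∀ w ∈ W, ∀ i : ℕ, ∃ a : 𝕂, ∀ k, w (Nat.pair i k) = a • z k := by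
  classical
  -- the "spread" vectors
  set y : ℕ → (ℕ → X) := fun i j => if (Nat.unpair j).1 = i then z (Nat.unpair j).2 else 0
    with hy
  have hyval : ∀ i k, y i (Nat.pair i k) = z k := by
    intro i k
    simp [hy, Nat.unpair_pair]
  have hyval' : ∀ i i' k, i ≠ i' → y i' (Nat.pair i k) = 0 := by
    intro i i' k hne
    simp only [hy, Nat.unpair_pair]
    rw [if_neg hne]
  have hyset : ∀ i, {j | y i j ≠ 0} = Set.range (Nat.pair i) := by
    intro i
    ext j
    simp only [Set.mem_setOf_eq, Set.mem_range]
    constructor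
    · intro hj
      refine ⟨(Nat.unpair j).2, ?_⟩
      by_cases h : (Nat.unpair j).1 = i
      · rw [← h]; exact Nat.pair_unpair j
      · exact absurd (by simp [hy, h]) hj
    · rintro ⟨k, rfl⟩
      rw [hyval]
      exact hz k
  have hynth : ∀ i, Nat.nth (fun j => y i j ≠ 0) = Nat.pair i := by
    intro i
    exact nth_eq_of_range (pair_strictMono i) (by rw [← hyset i]; rfl)
  have hyinf : ∀ i, {j | y i j ≠ 0}.Infinite := by
    intro i
    rw [hyset i]
    exact Set.infinite_range_of_injective (pair_strictMono i).injective
  have hyzf : ∀ i, zeroFree (y i) = z := by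
    intro i
    funext k
    rw [zeroFree_apply (hyinf i), hynth i, hyval]
  have hzne : z ≠ 0 := fun h => hz 0 (congrFun h 0)
  have hyzfne : ∀ i, zeroFree (y i) ≠ 0 := fun i => by rw [hyzf i]; exact hzne
  have hymem : ∀ i, y i ∈ E.carrier := by
    intro i
    rw [E.zeroFree_mem_iff (y i) (hyzfne i), hyzf i]
    exact hzmem
  set yV : ℕ → E.V := fun i => V.mk E (y i) (hymem i) with hyV
  set S : Submodule 𝕂 E.V := Submodule.span 𝕂 (Set.range yV) with hS
  set WV : Submodule 𝕂 E.V := S.topologicalClosure with hWV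
  obtain ⟨hsub, hclosed, hrank⟩ := E.map_incl_spec WV (Submodule.isClosed_topologicalClosure S)
  -- block structure of elements of the span
  have hspan : ∀ s ∈ S, ∀ i : ℕ, ∃ b : 𝕂, ∀ k, V.seq s (Nat.pair i k) = b • z k := by
    intro s hs
    induction hs using Submodule.span_induction with
    | mem v hv =>
      obtain ⟨i', rfl⟩ := hv
      intro i
      by_cases h : i = i'
      · subst h
        exact ⟨1, fun k => by rw [one_smul]; exact hyval i k⟩
      · exact ⟨0, fun k => by rw [zero_smul]; exact hyval' i i' k h⟩
    | zero => exact fun i => ⟨0, fun k => by simp⟩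
    | add v w _ _ hv hw =>
      intro i
      obtain ⟨bv, hbv⟩ := hv i
      obtain ⟨bw, hbw⟩ := hw i
      refine ⟨bv + bw, fun k => ?_⟩
      rw [V.seq_add, Pi.add_apply, hbv k, hbw k, add_smul]
    | smul a v _ hv =>
      intro i
      obtain ⟨bv, hbv⟩ := hv i
      refine ⟨a * bv, fun k => ?_⟩
      rw [V.seq_smul, Pi.smul_apply, hbv k, smul_smul]
  -- block structure of elements of the closure
  have hblock : ∀ w : E.V, w ∈ WV → ∀ i : ℕ, ∃ a : 𝕂, ∀ k, V.seq w (Nat.pair i k) = a • z k := by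
    intro w hw i
    have hwcl : w ∈ closure (S : Set E.V) := by
      have : w ∈ (WV : Set E.V) := hw
      rwa [hWV, Submodule.topologicalClosure_coe] at this
    rw [mem_closure_iff_seq_limit] at hwcl
    obtain ⟨s, hsmem, hslim⟩ := hwcl
    have hbn : ∀ n, ∃ b : 𝕂, ∀ k, V.seq (s n) (Nat.pair i k) = b • z k :=
      fun n => hspan (s n) (hsmem n) i
    choose b hb using hbn
    have hz0 : (0:ℝ) < ‖z 0‖ := norm_pos_iff.mpr (hz 0)
    have hbcauchy : CauchySeq b := by
      rw [Metric.cauchySeq_iff]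
      intro ε hε
      obtain ⟨N, hN⟩ := Metric.cauchySeq_iff.mp hslim.cauchySeq (ε * ‖z 0‖)
        (mul_pos hε hz0)
      refine ⟨N, fun m hm n hn => ?_⟩
      have key : ‖b m - b n‖ * ‖z 0‖ < ε * ‖z 0‖ := by
        have h1 : ‖b m - b n‖ * ‖z 0‖ = ‖(b m - b n) • z 0‖ := (norm_smul _ _).symm
        have h2 : (b m - b n) • z 0 = V.seq (s m) (Nat.pair i 0) - V.seq (s n) (Nat.pair i 0) := by
          rw [hb m 0, hb n 0, sub_smul]
        have h3 : ‖V.seq (s m) (Nat.pair i 0) - V.seq (s n) (Nat.pair i 0)‖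
            ≤ dist (s m) (s n) := by
          have h4 := E.coord_le_nrm (V.seq (s m - s n)) (s m - s n).seq_mem (Nat.pair i 0)
          rw [V.seq_sub, Pi.sub_apply] at h4
          rw [V.dist_def]
          exact h4
        calc ‖b m - b n‖ * ‖z 0‖ = ‖V.seq (s m) (Nat.pair i 0) - V.seq (s n) (Nat.pair i 0)‖ := by
              rw [h1, h2]
          _ ≤ dist (s m) (s n) := h3
          _ < ε * ‖z 0‖ := hN m hm n hn
      rw [dist_eq_norm]
      exact lt_of_mul_lt_mul_right key (le_of_lt hz0)
    obtain ⟨a, ha⟩ := cauchySeq_tendsto_of_complete hbcauchy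
    refine ⟨a, fun k => ?_⟩
    have h1 : Filter.Tendsto (fun n => V.seq (s n) (Nat.pair i k)) Filter.atTop
        (nhds (V.seq w (Nat.pair i k))) := by
      have := ((E.coordCLM (Nat.pair i k)).continuous.tendsto w).comp hslim
      exact this
    have h2 : Filter.Tendsto (fun n => b n • z k) Filter.atTop (nhds (a • z k)) :=
      ha.smul tendsto_const_nhds
    have heq : (fun n => V.seq (s n) (Nat.pair i k)) = fun n => b n • z k := by
      funext n; exact hb n k
    rw [heq] at h1
    exact tendsto_nhds_unique h1 h2
  -- norm bound for the generators
  have hyB : ∀ i, ‖yV i‖ ≤ E.K * E.nrm z := by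
    intro i
    rw [V.norm_def, V.seq_mk]
    have := E.nrm_le_K_mul (y i) (hyzfne i) (hymem i)
    rwa [hyzf i] at this
  -- the continuum family
  set T : Set ℝ := Set.Ioo (0:ℝ) 2⁻¹ with hT
  have htnorm : ∀ r : ↥T, ‖((r : ℝ) : 𝕂)‖ < 1 := by
    rintro ⟨r, hr0, hr1⟩
    rw [RCLike.norm_ofReal, abs_of_pos hr0]
    linarith
  have hsum : ∀ r : ↥T, Summable (fun i => ((r : ℝ) : 𝕂) ^ i • yV i) := by
    intro r
    apply Summable.of_norm_bounded
      ((summable_geometric_of_lt_one (norm_nonneg _) (htnorm r)).mul_right (E.K * E.nrm z))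
    intro i
    rw [norm_smul, norm_pow]
    exact mul_le_mul_of_nonneg_left (hyB i) (pow_nonneg (norm_nonneg _) i)
  set u : ↥T → E.V := fun r => ∑' i, ((r : ℝ) : 𝕂) ^ i • yV i with hu
  have humem : ∀ r, u r ∈ WV := by
    intro r
    have h1 : Filter.Tendsto (fun n => ∑ i ∈ Finset.range n, ((r : ℝ) : 𝕂) ^ i • yV i)
        Filter.atTop (nhds (u r)) := (hsum r).hasSum.tendsto_sum_nat
    have h2 : ∀ n, ∑ i ∈ Finset.range n, ((r : ℝ) : 𝕂) ^ i • yV i ∈ (S : Set E.V) :=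
      fun n => Submodule.sum_mem S fun i _ =>
        Submodule.smul_mem S _ (Submodule.subset_span ⟨i, rfl⟩)
    have : u r ∈ closure (S : Set E.V) :=
      mem_closure_of_tendsto h1 (Filter.Eventually.of_forall h2)
    have hcoe : u r ∈ (WV : Set E.V) := by
      rw [hWV, Submodule.topologicalClosure_coe]
      exact this
    exact hcoe
  have hcoord : ∀ (r : ↥T) (i : ℕ),
      V.seq (u r) (Nat.pair i 0) = ((r : ℝ) : 𝕂) ^ i • z 0 := by
    intro r i
    have h1 : E.coordCLM (Nat.pair i 0) (u r)
        = ∑' i', E.coordCLM (Nat.pair i 0) (((r : ℝ) : 𝕂) ^ i' • yV i') :=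
      (E.coordCLM (Nat.pair i 0)).map_tsum (hsum r)
    have h2 : ∀ i', E.coordCLM (Nat.pair i 0) (((r : ℝ) : 𝕂) ^ i' • yV i')
        = if i' = i then ((r : ℝ) : 𝕂) ^ i • z 0 else 0 := by
      intro i'
      rw [coordCLM_apply, V.seq_smul, Pi.smul_apply, V.seq_mk]
      by_cases h : i' = i
      · subst h
        rw [if_pos rfl, hyval]
      · rw [if_neg h, hyval' i i' 0 (fun hh => h hh.symm), smul_zero]
    rw [← coordCLM_apply]
    rw [h1]
    rw [tsum_congr h2, tsum_ite_eq]
  -- linear independence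
  have hindep : LinearIndependent 𝕂 u := by
    rw [linearIndependent_iff']
    intro s gcoef hsum0 r hr
    have hscal : ∀ i : ℕ, ∑ q ∈ s, gcoef q * ((q : ℝ) : 𝕂) ^ i = 0 := by
      intro i
      have h1 := congrArg (E.coordCLM (Nat.pair i 0)) hsum0
      rw [map_sum, map_zero] at h1
      have h2 : ∀ q ∈ s, E.coordCLM (Nat.pair i 0) (gcoef q • u q)
          = (gcoef q * ((q : ℝ) : 𝕂) ^ i) • z 0 := by
        intro q _
        rw [map_smul, coordCLM_apply, hcoord q i, smul_smul]
      rw [Finset.sum_congr rfl h2, ← Finset.sum_smul] at h1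
      by_contra hne
      exact hz 0 (by
        have := congrArg (fun w => (∑ q ∈ s, gcoef q * ((q : ℝ) : 𝕂) ^ i)⁻¹ • w) h1
        simpa [smul_smul, inv_mul_cancel₀ hne] using this)
    -- Vandermonde
    set M := s.card with hM
    set e := s.equivFin with he
    set t' : Fin M → 𝕂 := fun m => (((e.symm m : ↥T) : ℝ) : 𝕂) with ht'
    have ht'inj : Function.Injective t' := by
      intro m m' hmm
      have : ((e.symm m : ↥T) : ℝ) = ((e.symm m' : ↥T) : ℝ) := RCLike.ofReal_injective hmm
      exact (Equiv.injective e.symm) (Subtype.ext (Subtype.ext this))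
    set a' : Fin M → 𝕂 := fun m => gcoef (e.symm m) with ha'
    have hzero : a' = 0 := by
      apply vandermonde_trick t' ht'inj
      intro i
      have h3 : ∑ m : Fin M, a' m * t' m ^ i
          = ∑ q : ↥s, gcoef (q : ↥T) * (((q : ↥T) : ℝ) : 𝕂) ^ i :=
        Fintype.sum_equiv e.symm _ _ (fun m => rfl)
      rw [h3, Finset.sum_coe_sort s (fun q => gcoef q * ((q : ℝ) : 𝕂) ^ i)]
      exact hscal i
    have : gcoef (e.symm (e ⟨r, hr⟩)) = 0 := by
      have := congrFun hzero (e ⟨r, hr⟩)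
      exact this
    rwa [Equiv.symm_apply_apply] at this
  -- rank
  have hindepW : LinearIndependent 𝕂 (fun r : ↥T => (⟨u r, humem r⟩ : ↥WV)) := by
    apply LinearIndependent.of_comp WV.subtype
    exact hindep
  have hrankge : Cardinal.continuum ≤ Module.rank 𝕂 ↥WV := by
    have h1 := hindepW.cardinal_lift_le_rank
    rw [Cardinal.mk_Ioo_real (by norm_num : (0:ℝ) < 2⁻¹), Cardinal.lift_continuum,
      Cardinal.lift_uzero] at h1
    exact h1
  have hrankWV : Module.rank 𝕂 ↥WV = Cardinal.continuum :=
    le_antisymm (rank_closure_span_le yV) hrankge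
  refine ⟨WV.map (V.incl E), hsub, hclosed, by rw [hrank, hrankWV], ?_⟩
  rintro w ⟨v, hv, rfl⟩ i
  exact hblock v hv i

/-- **Biorthogonal construction**: any invariant sequence space contains a closed
`𝔠`-dimensional subspace. -/
lemma biorth_construction :
    ∃ W : Submodule 𝕂 (ℕ → X),
      (W : Set (ℕ → X)) ⊆ E.carrier ∧ ClosedIn E (W : Set (ℕ → X)) ∧
      Module.rank 𝕂 ↥W = Cardinal.continuum := by
  classical
  -- step existence: extend a biorthogonal system by one element
  have key : ∀ (n : ℕ) (prev : Fin n → E.V × (E.V →L[𝕂] 𝕂)),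
      ∃ q : E.V × (E.V →L[𝕂] 𝕂), ‖q.1‖ = 1 ∧ (∀ m, (prev m).2 q.1 = 0) ∧
        (∀ m, q.2 (prev m).1 = 0) ∧ q.2 q.1 = 1 := by
    intro n prev
    set U : Submodule 𝕂 E.V := Submodule.span 𝕂 (Set.range (fun m => (prev m).1)) with hU
    haveI hUfd : FiniteDimensional 𝕂 U :=
      FiniteDimensional.span_of_finite 𝕂 (Set.finite_range _)
    set Kk : Submodule 𝕂 E.V := ⨅ m : Fin n, LinearMap.ker ((prev m).2 : E.V →ₗ[𝕂] 𝕂) with hKk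
    have hnotle : ¬ (Kk ≤ U) := by
      intro hle
      set Φ : E.V →ₗ[𝕂] (Fin n → 𝕂) :=
        LinearMap.pi (fun m => ((prev m).2 : E.V →ₗ[𝕂] 𝕂)) with hΦ
      have hker : LinearMap.ker Φ = Kk := LinearMap.ker_pi _
      haveI h1 : FiniteDimensional 𝕂 (LinearMap.ker Φ) := by
        rw [hker]
        exact Submodule.finiteDimensional_of_le hle
      haveI h2 : FiniteDimensional 𝕂 (LinearMap.range Φ) := inferInstance
      have hrank := LinearMap.lift_rank_range_add_rank_ker Φ
      have hlt : Module.rank 𝕂 E.V < Cardinal.aleph0 := by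
        rw [← Cardinal.lift_lt_aleph0, ← hrank]
        exact Cardinal.add_lt_aleph0
          (Cardinal.lift_lt_aleph0.mpr (Module.rank_lt_aleph0 𝕂 _))
          (Cardinal.lift_lt_aleph0.mpr (Module.rank_lt_aleph0 𝕂 _))
      exact E.infinite_dim (Module.rank_lt_aleph0_iff.mp hlt)
    rw [SetLike.le_def] at hnotle
    push_neg at hnotle
    obtain ⟨u0, hu0K, hu0U⟩ := hnotle
    have hu0ne : u0 ≠ 0 := fun h => hu0U (h ▸ U.zero_mem)
    have hcpos : (0:ℝ) < ‖u0‖ := norm_pos_iff.mpr hu0ne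
    set v : E.V := ((‖u0‖⁻¹ : ℝ) : 𝕂) • u0 with hv
    have hvnorm : ‖v‖ = 1 := by
      rw [hv, norm_smul, RCLike.norm_ofReal, abs_of_pos (inv_pos.mpr hcpos),
        inv_mul_cancel₀ (ne_of_gt hcpos)]
    have hvK : v ∈ Kk := Kk.smul_mem _ hu0K
    have hvU : v ∉ U := by
      intro h
      apply hu0U
      have h2 := U.smul_mem ((‖u0‖ : ℝ) : 𝕂) h
      rw [hv, smul_smul, ← RCLike.ofReal_mul, mul_inv_cancel₀ (ne_of_gt hcpos)] at h2
      simpa using h2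
    haveI hUclosed : IsClosed (U : Set E.V) := Submodule.closed_of_finiteDimensional U
    have hmkne : (Submodule.Quotient.mk v : E.V ⧸ U) ≠ 0 := by
      rw [Ne, Submodule.Quotient.mk_eq_zero]
      exact hvU
    obtain ⟨φ', hφ'⟩ := SeparatingDual.exists_eq_one (R := 𝕂) hmkne
    have hcont : Continuous (U.mkQ) := continuous_quot_mk
    set φ : E.V →L[𝕂] 𝕂 := φ'.comp ⟨U.mkQ, hcont⟩ with hφ
    refine ⟨(v, φ), hvnorm, ?_, ?_, ?_⟩
    · intro m
      have := hvK
      rw [hKk, Submodule.mem_iInf] at this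
      exact this m
    · intro m
      have hmem : (prev m).1 ∈ U := Submodule.subset_span ⟨m, rfl⟩
      show φ' (U.mkQ (prev m).1) = 0
      rw [show U.mkQ (prev m).1 = 0 from (Submodule.Quotient.mk_eq_zero U).mpr hmem, map_zero]
    · exact hφ'
  -- the recursively defined biorthogonal system
  set step : (n : ℕ) → (Fin n → E.V × (E.V →L[𝕂] 𝕂)) → E.V × (E.V →L[𝕂] 𝕂) :=
    fun n prev => Classical.choose (key n prev) with hstep
  set seq : (n : ℕ) → Fin n → E.V × (E.V →L[𝕂] 𝕂) :=
    fun n => Nat.rec (fun m => m.elim0) (fun n ih => Fin.snoc ih (step n ih)) n with hseqdef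
  have hseq : ∀ n, seq (n + 1) = Fin.snoc (seq n) (step n (seq n)) := fun n => rfl
  set p : ℕ → E.V × (E.V →L[𝕂] 𝕂) := fun n => seq (n + 1) (Fin.last n) with hpdef
  have hplast : ∀ n, p n = step n (seq n) := by
    intro n
    show seq (n + 1) (Fin.last n) = step n (seq n)
    rw [hseq, Fin.snoc_last]
  have hcoh : ∀ n (m : Fin n), seq n m = p m := by
    intro n
    induction n with
    | zero => exact fun m => m.elim0
    | succ n ih =>
      intro m
      by_cases h : (m : ℕ) < n
      · have hm : m = Fin.castSucc ⟨(m : ℕ), h⟩ := by ext; rfl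
        rw [hseq, hm, Fin.snoc_castSucc, ih ⟨(m : ℕ), h⟩]
        rfl
      · have hm : m = Fin.last n := Fin.ext (Nat.le_antisymm (Nat.lt_succ_iff.mp m.2)
          (not_lt.mp h))
        rw [hseq, hm, Fin.snoc_last, ← hplast]
        rfl
  have hspec : ∀ n, ‖(p n).1‖ = 1 ∧ (∀ m : Fin n, (seq n m).2 (p n).1 = 0) ∧
      (∀ m : Fin n, (p n).2 (seq n m).1 = 0) ∧ (p n).2 (p n).1 = 1 := by
    intro n
    rw [hplast]
    exact Classical.choose_spec (key n (seq n))
  have hnorm : ∀ n, ‖(p n).1‖ = 1 := fun n => (hspec n).1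
  have hbio1 : ∀ n, (p n).2 (p n).1 = 1 := fun n => (hspec n).2.2.2
  have hbio0 : ∀ m n, m ≠ n → (p m).2 (p n).1 = 0 := by
    intro m n hmn
    rcases lt_or_gt_of_ne hmn with h | h
    · have := (hspec n).2.1 ⟨m, h⟩
      rwa [hcoh n ⟨m, h⟩] at this
    · have := (hspec m).2.2.1 ⟨n, h⟩
      rwa [hcoh m ⟨n, h⟩] at this
  -- the continuum family
  set S : Submodule 𝕂 E.V := Submodule.span 𝕂 (Set.range (fun n => (p n).1)) with hS
  set WV : Submodule 𝕂 E.V := S.topologicalClosure with hWV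
  obtain ⟨hsub, hclosed, hrank⟩ := E.map_incl_spec WV (Submodule.isClosed_topologicalClosure S)
  set T : Set ℝ := Set.Ioo (0:ℝ) 2⁻¹ with hT
  have htnorm : ∀ r : ↥T, ‖((r : ℝ) : 𝕂)‖ < 1 := by
    rintro ⟨r, hr0, hr1⟩
    rw [RCLike.norm_ofReal, abs_of_pos hr0]
    linarith
  have hsum : ∀ r : ↥T, Summable (fun n => ((r : ℝ) : 𝕂) ^ n • (p n).1) := by
    intro r
    apply Summable.of_norm_bounded
      (summable_geometric_of_lt_one (norm_nonneg _) (htnorm r))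
    intro n
    rw [norm_smul, norm_pow, hnorm n, mul_one]
  set u : ↥T → E.V := fun r => ∑' n, ((r : ℝ) : 𝕂) ^ n • (p n).1 with hu
  have humem : ∀ r, u r ∈ WV := by
    intro r
    have h1 : Filter.Tendsto (fun n => ∑ i ∈ Finset.range n, ((r : ℝ) : 𝕂) ^ i • (p i).1)
        Filter.atTop (nhds (u r)) := (hsum r).hasSum.tendsto_sum_nat
    have h2 : ∀ n, ∑ i ∈ Finset.range n, ((r : ℝ) : 𝕂) ^ i • (p i).1 ∈ (S : Set E.V) :=
      fun n => Submodule.sum_mem S fun i _ =>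
        Submodule.smul_mem S _ (Submodule.subset_span ⟨i, rfl⟩)
    have h3 : u r ∈ closure (S : Set E.V) :=
      mem_closure_of_tendsto h1 (Filter.Eventually.of_forall h2)
    have hcoe : u r ∈ (WV : Set E.V) := by
      rw [hWV, Submodule.topologicalClosure_coe]
      exact h3
    exact hcoe
  have hcoord : ∀ (r : ↥T) (i : ℕ), (p i).2 (u r) = ((r : ℝ) : 𝕂) ^ i := by
    intro r i
    rw [hu]
    rw [(p i).2.map_tsum (hsum r)]
    have h2 : ∀ n, (p i).2 (((r : ℝ) : 𝕂) ^ n • (p n).1)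
        = if n = i then ((r : ℝ) : 𝕂) ^ i else 0 := by
      intro n
      rw [map_smul]
      by_cases h : n = i
      · subst h
        rw [if_pos rfl, hbio1, smul_eq_mul, mul_one]
      · rw [if_neg h, hbio0 i n (fun hh => h hh.symm), smul_eq_mul, mul_zero]
    rw [tsum_congr h2, tsum_ite_eq]
  have hindep : LinearIndependent 𝕂 u := by
    rw [linearIndependent_iff']
    intro s gcoef hsum0 r hr
    have hscal : ∀ i : ℕ, ∑ q ∈ s, gcoef q * ((q : ℝ) : 𝕂) ^ i = 0 := by
      intro i
      have h1 := congrArg ((p i).2) hsum0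
      rw [map_sum, map_zero] at h1
      have h2 : ∀ q ∈ s, (p i).2 (gcoef q • u q) = gcoef q * ((q : ℝ) : 𝕂) ^ i := by
        intro q _
        rw [map_smul, hcoord q i, smul_eq_mul]
      rwa [Finset.sum_congr rfl h2] at h1
    set M := s.card with hM
    set e := s.equivFin with he
    set t' : Fin M → 𝕂 := fun m => (((e.symm m : ↥T) : ℝ) : 𝕂) with ht'
    have ht'inj : Function.Injective t' := by
      intro m m' hmm
      have : ((e.symm m : ↥T) : ℝ) = ((e.symm m' : ↥T) : ℝ) := RCLike.ofReal_injective hmm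
      exact (Equiv.injective e.symm) (Subtype.ext (Subtype.ext this))
    set a' : Fin M → 𝕂 := fun m => gcoef (e.symm m) with ha'
    have hzero : a' = 0 := by
      apply vandermonde_trick t' ht'inj
      intro i
      have h3 : ∑ m : Fin M, a' m * t' m ^ i
          = ∑ q : ↥s, gcoef (q : ↥T) * (((q : ↥T) : ℝ) : 𝕂) ^ i :=
        Fintype.sum_equiv e.symm _ _ (fun m => rfl)
      rw [h3, Finset.sum_coe_sort s (fun q => gcoef q * ((q : ℝ) : 𝕂) ^ i)]
      exact hscal i
    have hfin : gcoef (e.symm (e ⟨r, hr⟩)) = 0 := congrFun hzero (e ⟨r, hr⟩)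
    rwa [Equiv.symm_apply_apply] at hfin
  have hindepW : LinearIndependent 𝕂 (fun r : ↥T => (⟨u r, humem r⟩ : ↥WV)) := by
    apply LinearIndependent.of_comp WV.subtype
    exact hindep
  have hrankge : Cardinal.continuum ≤ Module.rank 𝕂 ↥WV := by
    have h1 := hindepW.cardinal_lift_le_rank
    rw [Cardinal.mk_Ioo_real (by norm_num : (0:ℝ) < 2⁻¹), Cardinal.lift_continuum,
      Cardinal.lift_uzero] at h1
    exact h1
  have hrankWV : Module.rank 𝕂 ↥WV = Cardinal.continuum :=
    le_antisymm (rank_closure_span_le _) hrankge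
  exact ⟨WV.map (V.incl E), hsub, hclosed, by rw [hrank, hrankWV]⟩

end InvSeqSpace

/-- **Theorem 2.5 of [NP].** If `f` is compatible with every `E_λ`, then
`G(E, f, (E_λ)_{λ∈Γ})` is either empty or `𝔠`-spaceable in `E`. -/
theorem continuum_spaceable_Gset
    {𝕂 X Y Γ : Type*} [RCLike 𝕂]
    [NormedAddCommGroup X] [NormedSpace 𝕂 X] [CompleteSpace X]
    [NormedAddCommGroup Y] [NormedSpace 𝕂 Y] [CompleteSpace Y]
    (E : InvSeqSpace 𝕂 X) (F : Γ → StrongInvSeqSpace 𝕂 Y) (f : X → Y)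
    (hcomp : ∀ lam : Γ, Compatible 𝕂 f ((F lam).carrier : Set (ℕ → Y))) :
    Gset E f F = ∅ ∨
      ∃ W : Submodule 𝕂 (ℕ → X),
        (W : Set (ℕ → X)) ⊆ (E.carrier : Set (ℕ → X)) ∧
        ClosedIn E (W : Set (ℕ → X)) ∧
        Module.rank 𝕂 ↥W = Cardinal.continuum ∧
        (W : Set (ℕ → X)) ⊆ Gset E f F ∪ {0} := by
  by_cases hGe : Gset E f F = ∅
  · exact Or.inl hGe
  right
  obtain ⟨x, hx⟩ := Set.nonempty_iff_ne_empty.mpr hGe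
  obtain ⟨hxmem, hxnot⟩ := hx
  rcases isEmpty_or_nonempty Γ with hΓ | hΓ
  · -- no target spaces: the membership condition is vacuous
    obtain ⟨W, h1, h2, h3⟩ := E.biorth_construction
    refine ⟨W, h1, h2, h3, ?_⟩
    intro w hw
    left
    refine ⟨h1 hw, ?_⟩
    rw [Set.iUnion_of_empty]
    exact Set.notMem_empty _
  · -- the mother vector has infinitely many nonzero coordinates
    have hinf : {j | x j ≠ 0}.Infinite := by
      by_contra hfin
      obtain ⟨N, hN⟩ := eventually_zero_of_finite hfin
      apply hxnot
      obtain ⟨lam⟩ := hΓ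
      refine Set.mem_iUnion.mpr ⟨lam, (F lam).c00_subset _ ⟨N, fun j hj => ?_⟩⟩
      rw [hN j hj, (hcomp lam).1]
    set z : ℕ → X := zeroFree x with hzdef
    have hzmem : z ∈ E.carrier :=
      (E.zeroFree_mem_iff x (zeroFree_ne_zero_iff.mpr hinf)).mp hxmem
    have hzk : ∀ k, z k ≠ 0 := by
      intro k
      rw [hzdef, zeroFree_apply hinf]
      exact Nat.nth_mem_of_infinite hinf k
    obtain ⟨W, h1, h2, h3, hblk⟩ := E.main_construction z hzmem hzk
    refine ⟨W, h1, h2, h3, ?_⟩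
    intro w hw
    by_cases hw0 : w = 0
    · exact Or.inr (by rw [hw0]; rfl)
    left
    refine ⟨h1 hw, ?_⟩
    intro hmem
    obtain ⟨lam, hfw⟩ := Set.mem_iUnion.mp hmem
    -- find a block on which `w` is a nonzero multiple of `z`
    have hex : ∃ j, w j ≠ 0 := by
      by_contra hno
      push_neg at hno
      exact hw0 (funext fun j => hno j)
    obtain ⟨j0, hj0⟩ := hex
    obtain ⟨a, ha⟩ := hblk w hw (Nat.unpair j0).1
    have hane : a ≠ 0 := by
      intro h0
      apply hj0
      have := ha (Nat.unpair j0).2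
      rwa [Nat.pair_unpair j0, h0, zero_smul] at this
    -- pass to the subsequence given by the block
    have hsub : (fun k => f (w (Nat.pair (Nat.unpair j0).1 k))) ∈ (F lam).carrier :=
      ((F lam).mem_iff_subseq (fun j => f (w j))).mp hfw _ (pair_strictMono (Nat.unpair j0).1)
    have hsub' : (fun k => f (a • z k)) ∈ (F lam).carrier := by
      rw [show (fun k => f (a • z k)) = fun k => f (w (Nat.pair (Nat.unpair j0).1 k)) from
        funext fun k => by rw [ha k]]
      exact hsub
    -- compatibility gives membership for `f ∘ z`
    have hfz : (fun k => f (z k)) ∈ (F lam).carrier := by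
      by_contra hno
      exact ((hcomp lam).2 z a hane hno) hsub'
    -- transfer membership back to `f ∘ x`, contradicting `x ∈ G`
    have hzf := zeroFree_comp f (hcomp lam).1 hinf
    by_cases hQ : {k | f (z k) ≠ 0}.Infinite
    · have hQne : zeroFree (fun k => f (z k)) ≠ 0 := zeroFree_ne_zero_iff.mpr hQ
      have hh1 : zeroFree (fun k => f (z k)) ∈ (F lam).carrier :=
        ((F lam).zeroFree_mem_iff _ hQne).mp hfz
      have hh2 : (fun j => f (x j)) ∈ (F lam).carrier := by
        rw [(F lam).zeroFree_mem_iff _ (by rw [hzf]; exact hQne), hzf]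
        exact hh1
      exact hxnot (Set.mem_iUnion.mpr ⟨lam, hh2⟩)
    · have h0 : zeroFree (fun j => f (x j)) = 0 := by
        rw [hzf]
        exact zeroFree_of_finite hQ
      have hRfin : ¬ {j | f (x j) ≠ 0}.Infinite :=
        fun hinf' => (zeroFree_ne_zero_iff.mpr hinf') h0
      obtain ⟨N, hN⟩ := eventually_zero_of_finite hRfin
      have : (fun j => f (x j)) ∈ (F lam).carrier := (F lam).c00_subset _ ⟨N, hN⟩
      exact hxnot (Set.mem_iUnion.mpr ⟨lam, this⟩)
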